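/- Let λ₋ > 0, k̃ > 0, L > 0 with L < (π/2 + arctan(k̃/λ₋))/λ₋, and let V : [0, L] → ℝ be continuous with V(z) ≤ −λ₋² for all z. If p : [0, L] → ℝ is differentiable, solves p'(z) + p(z)² = V(z) on [0, L], and satisfies p(L) = −k̃, then p(z) ≥ λ₋·tan(λ₋·(L − z) − arctan(k̃/λ₋)) for all z ∈ [0, L]. -/

import Mathlib

open Real Set

/-- Riccati comparison with backward boundary condition: if p' + p² = V ≤ -λ₋²
and p(L) = -k̃, then p(z) ≥ λ₋ tan(λ₋(L - z) - arctan(k̃/λ₋)). -/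
theorem stmt_6 (L lamm ktil : ℝ) (hlam : 0 < lamm) (hk : 0 < ktil) (hL : 0 < L)
    (hLsmall : L < (π / 2 + Real.arctan (ktil / lamm)) / lamm)
    (V p p' : ℝ → ℝ)
    (hV : ContinuousOn V (Set.Icc 0 L))
    (hVle : ∀ z ∈ Set.Icc 0 L, V z ≤ -lamm ^ 2)
    (hd : ∀ z ∈ Set.Icc 0 L, HasDerivAt p (p' z) z)
    (heq : ∀ z ∈ Set.Icc 0 L, p' z + p z ^ 2 = V z)
    (hbdry : p L = -ktil) :
    ∀ z ∈ Set.Icc 0 L,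
      lamm * Real.tan (lamm * (L - z) - Real.arctan (ktil / lamm)) ≤ p z := by
  set c := Real.arctan (ktil / lamm) with hc
  have hc0 : 0 < c := by
    have := Real.arctan_strictMono (div_pos hk hlam)
    rwa [Real.arctan_zero] at this
  have hcpi : c < π / 2 := Real.arctan_lt_pi_div_two _
  set u : ℝ → ℝ := fun z => lamm * (L - z) - c with hu
  set P : ℝ → ℝ := fun z => lamm * Real.tan (u z) with hP
  -- argument bounds
  have hrange : ∀ z ∈ Set.Icc 0 L, -(π/2) < u z ∧ u z < π/2 := by
    intro z hz
    obtain ⟨hz0, hzL⟩ := hz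
    constructor
    · have h1 : 0 ≤ lamm * (L - z) := mul_nonneg hlam.le (by linarith)
      simp only [hu]; nlinarith
    · have h2 : lamm * L < π / 2 + c := by
        have := (lt_div_iff₀ hlam).1 hLsmall
        linarith [this]
      have h3 : lamm * (L - z) ≤ lamm * L :=
        mul_le_mul_of_nonneg_left (by linarith) hlam.le
      simp only [hu]; nlinarith
  have hcos : ∀ z ∈ Set.Icc 0 L, Real.cos (u z) ≠ 0 := by
    intro z hz
    have h := hrange z hz
    exact (Real.cos_pos_of_mem_Ioo ⟨h.1, h.2⟩).ne'
  -- derivative of P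
  have hdu : ∀ z : ℝ, HasDerivAt u (-lamm) z := by
    intro z
    have : HasDerivAt (fun z => lamm * (L - z) - c) (lamm * (0 - 1) - 0) z := by
      exact (((hasDerivAt_const z L).sub (hasDerivAt_id z)).const_mul lamm).sub
        (hasDerivAt_const z c)
    exact this.congr_deriv (by ring)
  have hdP : ∀ z ∈ Set.Icc 0 L, HasDerivAt P (-(lamm^2) - (P z)^2) z := by
    intro z hz
    have hc' := hcos z hz
    have ht : HasDerivAt Real.tan (1 / Real.cos (u z) ^ 2) (u z) :=
      Real.hasDerivAt_tan hc'
    have h1 : HasDerivAt (fun z => Real.tan (u z)) (1 / Real.cos (u z) ^ 2 * (-lamm)) z :=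
      ht.comp z (hdu z)
    have h2 : HasDerivAt P (lamm * (1 / Real.cos (u z) ^ 2 * (-lamm))) z := h1.const_mul lamm
    have h3 : (1 : ℝ) / Real.cos (u z) ^ 2 = 1 + Real.tan (u z) ^ 2 := by
      rw [one_div, ← Real.inv_one_add_tan_sq hc', inv_inv]
    have h4 : lamm * (1 / Real.cos (u z) ^ 2 * (-lamm)) = -(lamm^2) - (P z)^2 := by
      rw [h3]; simp only [hP]; ring
    rwa [h4] at h2
  -- continuity of p, P on Icc
  have hpc : ContinuousOn p (Set.Icc 0 L) := fun z hz =>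
    ((hd z hz).continuousAt).continuousWithinAt
  have hPc : ContinuousOn P (Set.Icc 0 L) := fun z hz =>
    ((hdP z hz).continuousAt).continuousWithinAt
  set a : ℝ → ℝ := fun z => p z + P z with ha
  have hac : ContinuousOn a (Set.Icc 0 L) := hpc.add hPc
  -- clamp to extend a continuously
  set proj : ℝ → ℝ := fun t => max 0 (min t L) with hproj
  have hprojc : Continuous proj := continuous_const.max (continuous_id.min continuous_const)
  have hprojmem : ∀ t, proj t ∈ Set.Icc 0 L := by
    intro t
    refine ⟨le_max_left _ _, max_le hL.le (min_le_right _ _)⟩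
  have hprojeq : ∀ z ∈ Set.Icc 0 L, proj z = z := by
    intro z hz
    simp only [hproj]
    rw [min_eq_left hz.2, max_eq_right hz.1]
  set atil : ℝ → ℝ := fun t => a (proj t) with hatil
  have hatilc : Continuous atil := hac.comp_continuous hprojc hprojmem
  -- integrating factor exponent
  set F : ℝ → ℝ := fun z => ∫ t in z..L, atil t with hF
  have hdF : ∀ z : ℝ, HasDerivAt F (-(atil z)) z := by
    intro z
    have h1 : HasDerivAt (fun y => ∫ t in L..y, atil t) (atil z) z :=
      (hatilc.integral_hasStrictDerivAt L z).hasDerivAt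
    have h2 : F = fun y => -(∫ t in L..y, atil t) := by
      funext y
      simp only [hF]
      rw [intervalIntegral.integral_symm]
    rw [h2]
    exact h1.neg
  -- the monotone quantity
  set G : ℝ → ℝ := fun z => (p z - P z) * Real.exp (-F z) with hG
  have hdG : ∀ z ∈ Set.Icc 0 L, HasDerivAt G ((V z + lamm^2) * Real.exp (-F z)) z := by
    intro z hz
    have h1 : HasDerivAt (fun y => p y - P y) (p' z - (-(lamm^2) - (P z)^2)) z :=
      (hd z hz).sub (hdP z hz)
    have h2 : HasDerivAt (fun y => Real.exp (-F y)) (Real.exp (-F z) * atil z) z := by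
      have hnF : HasDerivAt (fun y => -F y) (atil z) z := by
        have := (hdF z).neg; rw [neg_neg] at this; exact this
      exact (Real.hasDerivAt_exp (-F z)).comp z hnF
    have h3 := h1.mul h2
    have hpz : p' z = V z - p z ^ 2 := by have := heq z hz; linarith
    have hat : atil z = p z + P z := by
      simp only [hatil, hprojeq z hz, ha]
    have h4 : (p' z - (-(lamm^2) - (P z)^2)) * Real.exp (-F z)
        + (p z - P z) * (Real.exp (-F z) * atil z)
        = (V z + lamm^2) * Real.exp (-F z) := by
      rw [hpz, hat]; ring
    rwa [h4] at h3
  have hGanti : AntitoneOn G (Set.Icc 0 L) := by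
    apply antitoneOn_of_deriv_nonpos (convex_Icc 0 L)
    · exact fun z hz => ((hdG z hz).continuousAt).continuousWithinAt
    · intro z hz
      rw [interior_Icc] at hz
      exact ((hdG z (Ioo_subset_Icc_self hz)).differentiableAt).differentiableWithinAt
    · intro z hz
      rw [interior_Icc] at hz
      rw [(hdG z (Ioo_subset_Icc_self hz)).deriv]
      have := hVle z (Ioo_subset_Icc_self hz)
      have he : 0 < Real.exp (-F z) := Real.exp_pos _
      nlinarith
  -- boundary value
  have hGL : G L = 0 := by
    have hPL : P L = -ktil := by
      have htc : Real.tan c = ktil / lamm := Real.tan_arctan _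
      simp only [hP, hu, sub_self, mul_zero, zero_sub, Real.tan_neg, htc]
      field_simp
    simp [hG, hbdry, hPL]
  intro z hz
  have hzIcc : z ∈ Set.Icc 0 L := hz
  have hL' : L ∈ Set.Icc (0:ℝ) L := ⟨hL.le, le_rfl⟩
  have := hGanti hzIcc hL' hz.2
  rw [hGL] at this
  have he : 0 < Real.exp (-F z) := Real.exp_pos _
  have hw : 0 ≤ p z - P z := by
    by_contra hneg
    push_neg at hneg
    have : G z < 0 := mul_neg_of_neg_of_pos (by linarith) he
    linarith
  simp only [hP, hu] at hw
  linarith
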